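/- Let G = (V, E) be a finite word-representable graph and let V1, …, Vk be pairwise disjoint subsets of V. Let E(Vi) denote the set of all edges of G having both endpoints in Vi. Then the graph H = G \ (E(V1) ∪ ⋯ ∪ E(Vk)), obtained from G by removing every edge whose both endpoints lie in the same set Vi (for some 1 ≤ i ≤ k), is 1-11-representable. -/

import Mathlib

/-- The subsequence of `w` consisting of all occurrences of `x` and `y`. -/
def restrictWord {V : Type*} [DecidableEq V] (w : List V) (x y : V) : List V :=
  w.filter (fun z => decide (z = x ∨ z = y))

/-- The number of occurrences of the consecutive pattern 11 in a word:
the number of indices `i` such that the `i`-th and `(i+1)`-th letters are equal. -/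
def pattern11Count {V : Type*} [DecidableEq V] (l : List V) : ℕ :=
  ((l.zip l.tail).filter (fun p => decide (p.1 = p.2))).length

/-- A word `w` over `V` `k`-11-represents the simple graph `G` if every vertex occurs in `w`
and, for all distinct `x y`, `xy` is an edge iff `w|_{x,y}` has at most `k` occurrences of
the pattern 11. -/
def Represents {V : Type*} [DecidableEq V] (k : ℕ) (w : List V) (G : SimpleGraph V) : Prop :=
  (∀ v : V, v ∈ w) ∧
  ∀ x y : V, x ≠ y → (G.Adj x y ↔ pattern11Count (restrictWord w x y) ≤ k)

/-- A graph is `k`-11-representable if some word `k`-11-represents it. -/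
def Representable {V : Type*} [DecidableEq V] (k : ℕ) (G : SimpleGraph V) : Prop :=
  ∃ w : List V, Represents k w G

/-- A word that is a permutation of the vertex set: each vertex occurs exactly once. -/
def IsPermWord {V : Type*} (p : List V) : Prop :=
  p.Nodup ∧ ∀ v : V, v ∈ p

/-- A graph is permutationally `k`-11-representable if some concatenation of permutations
of the vertex set `k`-11-represents it. -/
def PermRepresentable {V : Type*} [DecidableEq V] (k : ℕ) (G : SimpleGraph V) : Prop :=
  ∃ ps : List (List V), (∀ p ∈ ps, IsPermWord p) ∧ Represents k ps.flatten G

section Aux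
variable {V : Type*} [DecidableEq V]

lemma p11_nil : pattern11Count ([] : List V) = 0 := rfl

lemma p11_single (a : V) : pattern11Count [a] = 0 := rfl

lemma p11_cons_cons (a b : V) (t : List V) :
    pattern11Count (a :: b :: t) = (if a = b then 1 else 0) + pattern11Count (b :: t) := by
  unfold pattern11Count
  rw [List.tail_cons, List.tail_cons, List.zip_cons_cons, List.filter_cons]
  by_cases h : a = b <;> simp [h, Nat.add_comm]

/-- junction count between two words -/
def junc (u v : List V) : ℕ :=
  match u.getLast?, v.head? with
  | some a, some b => if a = b then 1 else 0
  | _, _ => 0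

lemma junc_eval {u v : List V} {a b : V} (hu : u.getLast? = some a) (hv : v.head? = some b) :
    junc u v = if a = b then 1 else 0 := by
  unfold junc; rw [hu, hv]

lemma junc_nil_left (v : List V) : junc [] v = 0 := by
  unfold junc; rfl

lemma junc_nil_right (u : List V) : junc u [] = 0 := by
  unfold junc
  cases h : u.getLast? <;> rfl

lemma p11_cons (a : V) (l : List V) :
    pattern11Count (a :: l) = junc [a] l + pattern11Count l := by
  cases l with
  | nil => simp [pattern11Count, junc_nil_right]
  | cons b t =>
    rw [p11_cons_cons, junc_eval (u := [a]) (v := b :: t) (a := a) (b := b) rfl rfl]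

lemma p11_append (u v : List V) :
    pattern11Count (u ++ v) = pattern11Count u + junc u v + pattern11Count v := by
  induction u with
  | nil => simp [junc_nil_left, p11_nil]
  | cons a u ih =>
    rw [List.cons_append, p11_cons, p11_cons, ih]
    cases u with
    | nil => simp [junc_nil_left, junc_nil_right, p11_nil]
    | cons b t =>
      have h1 : junc [a] ((b :: t) ++ v) = junc [a] (b :: t) := by
        unfold junc; rfl
      have h2 : junc (a :: b :: t) v = junc (b :: t) v := by
        unfold junc; rw [List.getLast?_cons_cons]
      rw [h1, h2]; ring

lemma p11_append_ge (u v : List V) :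
    pattern11Count u + pattern11Count v ≤ pattern11Count (u ++ v) := by
  rw [p11_append]; omega

lemma count_sandwich {A P Q : List V} {s e : V}
    (hs : A.head? = some s) (he : A.getLast? = some e)
    (h0 : pattern11Count A = 0) (hne : s ≠ e) :
    pattern11Count (P ++ (A ++ (A ++ Q)))
      = pattern11Count P + junc P A + junc A Q + pattern11Count Q := by
  have h1 : (A ++ (A ++ Q)).head? = some s := by
    rw [List.head?_append, hs, Option.some_or]
  have hPA : junc P (A ++ (A ++ Q)) = junc P A := by
    unfold junc; rw [h1, hs]
  have h2 : (A ++ Q).head? = some s := by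
    rw [List.head?_append, hs, Option.some_or]
  have hAQ2 : junc A (A ++ Q) = 0 := by
    rw [junc_eval he h2, if_neg (fun h => hne h.symm)]
  rw [p11_append, hPA, p11_append, p11_append, h0, hAQ2]
  ring

lemma double_ge {A P Q : List V} (h : 1 ≤ pattern11Count A) :
    2 ≤ pattern11Count (P ++ (A ++ (A ++ Q))) := by
  have g1 := p11_append_ge P (A ++ (A ++ Q))
  have g2 := p11_append_ge A (A ++ Q)
  have g3 := p11_append_ge A Q
  omega

end Aux
section Aux2
variable {V : Type*} [DecidableEq V]

lemma restrict_append (w₁ w₂ : List V) (x y : V) :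
    restrictWord (w₁ ++ w₂) x y = restrictWord w₁ x y ++ restrictWord w₂ x y :=
  List.filter_append _ _

lemma mem_restrict_iff {w : List V} {x y z : V} :
    z ∈ restrictWord w x y ↔ z ∈ w ∧ (z = x ∨ z = y) := by
  simp [restrictWord]

lemma restrict_count_left (w : List V) (x y : V) :
    (restrictWord w x y).count x = w.count x :=
  List.count_filter (by simp)

lemma restrict_count_right (w : List V) (x y : V) :
    (restrictWord w x y).count y = w.count y :=
  List.count_filter (by simp)

/-- list of first occurrences, in order of first occurrence -/
def fo (w : List V) : List V := (w.reverse.dedup).reverse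

lemma fo_nodup (w : List V) : (fo w).Nodup :=
  List.nodup_reverse.2 (List.nodup_dedup _)

lemma mem_fo {w : List V} {z : V} : z ∈ fo w ↔ z ∈ w := by
  simp [fo, List.mem_dedup]

lemma filter_dedup (p : V → Bool) : ∀ l : List V, (List.dedup l).filter p = (l.filter p).dedup := by
  intro l; induction l with
  | nil => rfl
  | cons a l ih =>
    by_cases h : a ∈ l
    · rw [List.dedup_cons_of_mem h, ih, List.filter_cons]
      by_cases hp : p a
      · rw [if_pos hp, List.dedup_cons_of_mem (List.mem_filter.2 ⟨h, hp⟩)]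
      · rw [if_neg hp]
    · rw [List.dedup_cons_of_notMem h, List.filter_cons, List.filter_cons]
      by_cases hp : p a
      · rw [if_pos hp, if_pos hp,
          List.dedup_cons_of_notMem (fun hc => h (List.mem_filter.1 hc).1), ih]
      · rw [if_neg hp, if_neg hp, ih]

lemma restrict_fo (w : List V) (x y : V) :
    restrictWord (fo w) x y = fo (restrictWord w x y) := by
  unfold fo restrictWord
  rw [List.filter_reverse, filter_dedup, List.filter_reverse]

lemma getLast?_cons_of_ne_nil {a : V} {l : List V} (h : l ≠ []) :
    (a :: l).getLast? = l.getLast? := by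
  cases l with
  | nil => exact absurd rfl h
  | cons b t => exact List.getLast?_cons_cons

lemma dedup_ne_nil {l : List V} (h : l ≠ []) : l.dedup ≠ [] := by
  intro hc
  obtain ⟨a, t, rfl⟩ := List.exists_cons_of_ne_nil h
  have : a ∈ List.dedup (a :: t) := List.mem_dedup.2 (List.mem_cons_self)
  rw [hc] at this
  exact List.not_mem_nil this

lemma getLast?_dedup : ∀ l : List V, l.dedup.getLast? = l.getLast? := by
  intro l; induction l with
  | nil => rfl
  | cons a l ih =>
    by_cases h : a ∈ l
    · have hl : l ≠ [] := List.ne_nil_of_mem h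
      rw [List.dedup_cons_of_mem h, ih, getLast?_cons_of_ne_nil hl]
    · cases hl : l with
      | nil => subst hl; rfl
      | cons b t =>
        subst hl
        rw [List.dedup_cons_of_notMem h,
          getLast?_cons_of_ne_nil (dedup_ne_nil (List.cons_ne_nil b t)),
          getLast?_cons_of_ne_nil (List.cons_ne_nil b t), ih]

lemma head?_fo (w : List V) : (fo w).head? = w.head? := by
  unfold fo
  rw [List.head?_reverse, getLast?_dedup, List.getLast?_reverse]

lemma eq_single {y : V} : ∀ l : List V, y ∈ l → (∀ z ∈ l, z = y) → l.Nodup → l = [y] := by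
  intro l hy hall hn
  cases l with
  | nil => exact absurd hy List.not_mem_nil
  | cons a t =>
    have ha : a = y := hall a (List.mem_cons_self)
    subst ha
    have ht : t = [] := by
      rw [List.eq_nil_iff_forall_not_mem]
      intro z hz
      have := hall z (List.mem_cons_of_mem a hz)
      subst this
      exact (List.nodup_cons.1 hn).1 hz
    rw [ht]

lemma eq_pair {x y : V} (hxy : x ≠ y) (l : List V) (hn : l.Nodup) (hx : x ∈ l) (hy : y ∈ l)
    (hall : ∀ z ∈ l, z = x ∨ z = y) : l = [x, y] ∨ l = [y, x] := by
  cases l with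
  | nil => exact absurd hx List.not_mem_nil
  | cons a t =>
    have hnt : t.Nodup := (List.nodup_cons.1 hn).2
    have hat : a ∉ t := (List.nodup_cons.1 hn).1
    rcases hall a (List.mem_cons_self) with ha | ha
    · left
      subst ha
      have hyt : y ∈ t := by
        rcases List.mem_cons.1 hy with h | h
        · exact absurd h.symm hxy
        · exact h
      have : t = [y] := by
        refine eq_single t hyt (fun z hz => ?_) hnt
        rcases hall z (List.mem_cons_of_mem _ hz) with h | h
        · exact absurd h (by rintro rfl; exact hat hz)
        · exact h
      rw [this]
    · right
      subst ha
      have hxt : x ∈ t := by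
        rcases List.mem_cons.1 hx with h | h
        · exact absurd h hxy
        · exact h
      have : t = [x] := by
        refine eq_single t hxt (fun z hz => ?_) hnt
        rcases hall z (List.mem_cons_of_mem _ hz) with h | h
        · exact h
        · exact absurd h (by rintro rfl; exact hat hz)
      rw [this]
  
end Aux2
section Aux3
variable {V : Type*} [DecidableEq V]

lemma alt_count {x y : V} (hxy : x ≠ y) :
    ∀ (T : List V) (a : V), (∀ z ∈ a :: T, z = x ∨ z = y) → pattern11Count (a :: T) = 0 →
      (a :: T).count x + (if a = y ∧ (a :: T).getLast? = some y then 1 else 0)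
        = (a :: T).count y + (if a = x ∧ (a :: T).getLast? = some x then 1 else 0) := by
  intro T
  induction T with
  | nil =>
    intro a hz _
    rcases hz a (List.mem_cons_self) with ha | ha <;>
      simp [ha, List.count_cons, hxy, Ne.symm hxy]
  | cons b T ih =>
    intro a hz h0
    rw [p11_cons_cons] at h0
    have hab : a ≠ b := by
      intro h; rw [if_pos h] at h0; omega
    have h0' : pattern11Count (b :: T) = 0 := by
      rw [if_neg hab] at h0; omega
    have hzb : ∀ z ∈ b :: T, z = x ∨ z = y := fun z hz' => hz z (List.mem_cons_of_mem a hz')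
    have IH := ih b hzb h0'
    have hL : (a :: b :: T).getLast? = (b :: T).getLast? := List.getLast?_cons_cons
    obtain ⟨l, hl⟩ : ∃ l, (b :: T).getLast? = some l := by
      cases h : (b :: T).getLast? with
      | none => exact absurd (List.getLast?_eq_none_iff.1 h) (List.cons_ne_nil b T)
      | some l => exact ⟨l, rfl⟩
    have hlxy : l = x ∨ l = y := hzb l (List.mem_of_getLast? hl)
    have hax : a = x ∨ a = y := hz a (List.mem_cons_self)
    have hbx : b = x ∨ b = y := hzb b (List.mem_cons_self)
    rw [hL, hl]
    rw [hl] at IH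
    rcases hax with ha | ha <;> rcases hbx with hb | hb
    · exact absurd (ha.trans hb.symm) hab
    · rcases hlxy with hl' | hl' <;>
      · simp only [ha, hb, hl', List.count_cons] at IH ⊢
        simp [hxy, Ne.symm hxy] at IH ⊢
        omega
    · rcases hlxy with hl' | hl' <;>
      · simp only [ha, hb, hl', List.count_cons] at IH ⊢
        simp [hxy, Ne.symm hxy] at IH ⊢
        omega
    · exact absurd (ha.trans hb.symm) hab

lemma ends_ne {x y : V} (hxy : x ≠ y) {A : List V} (hmem : ∀ z ∈ A, z = x ∨ z = y)
    (h0 : pattern11Count A = 0) (hc : A.count x = A.count y)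
    {s e : V} (hs : A.head? = some s) (he : A.getLast? = some e) : s ≠ e := by
  have hAne : A ≠ [] := by rintro rfl; simp at hs
  obtain ⟨a, T, rfl⟩ := List.exists_cons_of_ne_nil hAne
  have hsa : s = a := by simpa using hs.symm
  intro hse
  have key := alt_count hxy T a hmem h0
  have hea : (a :: T).getLast? = some a := by
    rw [he]; exact congrArg _ (hse.symm.trans hsa)
  rcases hmem a (List.mem_cons_self) with ha | ha
  · rw [if_neg (by rw [ha]; rintro ⟨h, -⟩; exact hxy h),
      if_pos ⟨ha, by rw [hea, ha]⟩] at key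
    omega
  · rw [if_pos ⟨ha, by rw [hea, ha]⟩,
      if_neg (by rw [ha]; rintro ⟨h, -⟩; exact hxy h.symm)] at key
    omega

lemma head_eq_of_lt {x y : V} (hxy : x ≠ y) {A : List V} (hmem : ∀ z ∈ A, z = x ∨ z = y)
    (h0 : pattern11Count A = 0) (hc : A.count x < A.count y)
    {s : V} (hs : A.head? = some s) : s = y := by
  have hAne : A ≠ [] := by rintro rfl; simp at hs
  obtain ⟨a, T, rfl⟩ := List.exists_cons_of_ne_nil hAne
  have hsa : s = a := by simpa using hs.symm
  have key := alt_count hxy T a hmem h0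
  rcases hmem a (List.mem_cons_self) with ha | ha
  · exfalso
    rw [if_neg (by rw [ha]; rintro ⟨h, -⟩; exact hxy h)] at key
    split_ifs at key <;> omega
  · rw [hsa, ha]

lemma flat_nil {ι : Type*} (L : List ι) (h : ι → List V) (H : ∀ i ∈ L, h i = []) :
    L.flatMap h = [] := by
  induction L with
  | nil => rfl
  | cons a L ih =>
    rw [List.flatMap_cons, H a (List.mem_cons_self), List.nil_append]
    exact ih (fun i hi => H i (List.mem_cons_of_mem _ hi))

lemma flat_single {ι : Type*} (h : ι → List V) :
    ∀ (L : List ι), L.Nodup → ∀ i0 ∈ L, (∀ i ∈ L, i ≠ i0 → h i = []) → L.flatMap h = h i0 := by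
  intro L
  induction L with
  | nil => intro _ i0 hi0; exact absurd hi0 List.not_mem_nil
  | cons a L ih =>
    intro hn i0 hi0 H
    rw [List.flatMap_cons]
    by_cases hai : a = i0
    · have hnilL : ∀ i ∈ L, h i = [] := by
        intro i hi
        by_cases hii : i = i0
        · exact absurd hi (by rw [hii, ← hai]; exact (List.nodup_cons.1 hn).1)
        · exact H i (List.mem_cons_of_mem _ hi) hii
      rw [flat_nil L h hnilL, List.append_nil, hai]
    · rw [H a (List.mem_cons_self) hai, List.nil_append]
      have hi0' : i0 ∈ L := by
        rcases List.mem_cons.1 hi0 with h' | h'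
        exacts [absurd h'.symm hai, h']
      exact ih (List.nodup_cons.1 hn).2 i0 hi0'
        (fun i hi hne => H i (List.mem_cons_of_mem _ hi) hne)

lemma flat_pair {k : ℕ} {i0 j0 : Fin k} (hij : i0 < j0) (h : Fin k → List V) :
    ∀ (L : List (Fin k)), L.Pairwise (· < ·) → i0 ∈ L → j0 ∈ L →
      (∀ i ∈ L, i ≠ i0 → i ≠ j0 → h i = []) → L.flatMap h = h i0 ++ h j0 := by
  intro L
  induction L with
  | nil => intro _ hi; exact absurd hi List.not_mem_nil
  | cons a L ih =>
    intro hp hi hj H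
    obtain ⟨ha, hp'⟩ := List.pairwise_cons.1 hp
    have hnd : L.Nodup := hp'.imp (fun h => ne_of_lt h)
    rw [List.flatMap_cons]
    by_cases hai : a = i0
    · subst hai
      have hjL : j0 ∈ L := by
        rcases List.mem_cons.1 hj with h' | h'
        exacts [absurd h'.symm (ne_of_lt hij), h']
      rw [flat_single h L hnd j0 hjL (fun i hi' hne => H i (List.mem_cons_of_mem _ hi')
        (fun hc => absurd (ha i hi') (by rw [hc]; exact lt_irrefl _)) hne)]
    · have haj : a ≠ j0 := by
        intro hc
        have hiL : i0 ∈ L := by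
          rcases List.mem_cons.1 hi with h' | h'
          exacts [absurd h'.symm hai, h']
        have := ha i0 hiL
        rw [hc] at this
        exact lt_asymm hij this
      have hiL : i0 ∈ L := by
        rcases List.mem_cons.1 hi with h' | h'
        exacts [absurd h'.symm hai, h']
      have hjL : j0 ∈ L := by
        rcases List.mem_cons.1 hj with h' | h'
        exacts [absurd h'.symm haj, h']
      rw [H a (List.mem_cons_self) hai haj, List.nil_append]
      exact ih hp' hiL hjL (fun i hi' => H i (List.mem_cons_of_mem _ hi'))

end Aux3
section Aux5
variable {V : Type*} [DecidableEq V]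

lemma p11_pair (a b : V) : pattern11Count [a, b] = if a = b then 1 else 0 := by
  rw [p11_cons_cons, p11_single, Nat.add_zero]

lemma if_sum_eval {x y s e : V} (hxy : x ≠ y) (hs : s = x ∨ s = y) (he : e = x ∨ e = y)
    (hse : s ≠ e) (a : V) (ha : a = x ∨ a = y) :
    (if a = s then 1 else 0) + (if e = a then 1 else 0) = 1 := by
  rcases ha with h0 | h0 <;> rcases hs with h1 | h1 <;> rcases he with h2 | h2 <;>
    first
      | exact absurd (h1.trans h2.symm) hse
      | simp [h0, h1, h2, hxy, Ne.symm hxy]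

end Aux5
section Uniform
variable {V : Type*} [Fintype V] [DecidableEq V]

lemma step_uniform (G : SimpleGraph V) (M : ℕ) :
    ∀ (d : ℕ) (w : List V), Represents 0 w G → (∀ v, w.count v ≤ M) →
      (∑ v : V, (M - w.count v)) ≤ d →
      ∃ w', Represents 0 w' G ∧ ∀ v, w'.count v = M := by
  intro d
  induction d with
  | zero =>
    intro w hw hle hsum
    refine ⟨w, hw, fun v => ?_⟩
    have h1 : M - w.count v = 0 :=
      Finset.sum_eq_zero_iff.1 (Nat.le_zero.1 hsum) v (Finset.mem_univ v)
    have := hle v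
    omega
  | succ d ih =>
    intro w hw hle hsum
    by_cases hu : ∀ v : V, w.count v = M
    · exact ⟨w, hw, hu⟩
    push_neg at hu
    obtain ⟨v0, hv0⟩ := hu
    have hv0' : w.count v0 < M := lt_of_le_of_ne (hle v0) hv0
    set p := (fo w).filter (fun v => decide (w.count v < M)) with hp
    have hpcount : ∀ v : V, p.count v = if w.count v < M then 1 else 0 := by
      intro v
      by_cases h : w.count v < M
      · rw [if_pos h]
        refine List.count_eq_one_of_mem ((fo_nodup w).filter _) ?_
        rw [hp, List.mem_filter]
        exact ⟨mem_fo.2 (hw.1 v), by simpa using h⟩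
      · rw [if_neg h]
        refine List.count_eq_zero_of_not_mem ?_
        rw [hp, List.mem_filter]
        rintro ⟨-, hcc⟩
        exact h (by simpa using hcc)
    have hcnt : ∀ v : V, (p ++ w).count v = (if w.count v < M then 1 else 0) + w.count v := by
      intro v; rw [List.count_append, hpcount]
    refine ih (p ++ w) ⟨fun v => List.mem_append_right _ (hw.1 v), fun x y hxy => ?_⟩
      (fun v => by rw [hcnt]; have := hle v; split_ifs with h <;> omega) ?_
    · -- adjacency for p ++ w
      rw [restrict_append]
      set A := restrictWord w x y with hA
      set P := restrictWord p x y with hP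
      have hiff := hw.2 x y hxy
      have hxA : x ∈ A := mem_restrict_iff.2 ⟨hw.1 x, Or.inl rfl⟩
      have hyA : y ∈ A := mem_restrict_iff.2 ⟨hw.1 y, Or.inr rfl⟩
      have hmemA : ∀ z ∈ A, z = x ∨ z = y := fun z hz => (mem_restrict_iff.1 hz).2
      have hAne : A ≠ [] := List.ne_nil_of_mem hxA
      obtain ⟨s, hs⟩ : ∃ s, A.head? = some s := by
        cases h : A.head? with
        | none => exact absurd (List.head?_eq_none_iff.1 h) hAne
        | some s => exact ⟨s, rfl⟩
      have hcx : A.count x = w.count x := restrict_count_left w x y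
      have hcy : A.count y = w.count y := restrict_count_right w x y
      constructor
      · intro hadj
        have h0 : pattern11Count A = 0 := Nat.le_zero.1 (hiff.1 hadj)
        have hPP : P = (fo w).filter
            (fun z => decide (z = x ∨ z = y) && decide (w.count z < M)) := by
          rw [hP, hp, restrictWord, List.filter_filter]
        by_cases dx : w.count x < M <;> by_cases dy : w.count y < M
        · -- both deficient
          have hPfo : P = fo A := by
            rw [hPP, ← restrict_fo, restrictWord]
            refine List.filter_congr (fun z hz => ?_)
            by_cases hzz : z = x ∨ z = y
            · have : w.count z < M := by rcases hzz with rfl | rfl <;> assumption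
              simp [hzz, this]
            · simp [hzz]
          have hfos : (fo A).head? = some s := by rw [head?_fo, hs]
          have hpair : fo A = [x, y] ∨ fo A = [y, x] :=
            eq_pair hxy (fo A) (fo_nodup A) (mem_fo.2 hxA) (mem_fo.2 hyA)
              (fun z hz => hmemA z (mem_fo.1 hz))
          rcases hpair with hfo | hfo
          · have hsx : s = x := by rw [hfo] at hfos; simpa using hfos.symm
            rw [hPfo, hfo, p11_append, p11_cons_cons, p11_single,
              junc_eval (u := [x, y]) (a := y) (by simp) hs, h0, hsx, if_neg (Ne.symm hxy),
              if_neg hxy]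
          · have hsy : s = y := by rw [hfo] at hfos; simpa using hfos.symm
            rw [hPfo, hfo, p11_append, p11_cons_cons, p11_single,
              junc_eval (u := [y, x]) (a := x) (by simp) hs, h0, hsy, if_neg hxy,
              if_neg (Ne.symm hxy)]
        · -- x deficient, y not
          have hyM : w.count y = M := le_antisymm (hle y) (not_lt.1 dy)
          have hPx : P = [x] := by
            refine eq_single P ?_ (fun z hz => ?_) ?_
            · rw [hP, restrictWord, List.mem_filter]
              rw [hp, List.mem_filter]
              exact ⟨⟨mem_fo.2 (hw.1 x), by simpa using dx⟩, by simp⟩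
            · rw [hP, restrictWord, List.mem_filter] at hz
              obtain ⟨hzp, hzxy⟩ := hz
              rw [hp, List.mem_filter] at hzp
              rcases (by simpa using hzxy : z = x ∨ z = y) with rfl | rfl
              · rfl
              · exact absurd (by simpa using hzp.2) dy
            · exact ((fo_nodup w).filter _).filter _
          have hsy : s = y :=
            head_eq_of_lt hxy hmemA h0 (by omega) hs
          rw [hPx, p11_append, p11_single, junc_eval (u := [x]) (a := x) (by simp) hs, h0, hsy,
            if_neg hxy]
        · -- y deficient, x not
          have hxM : w.count x = M := le_antisymm (hle x) (not_lt.1 dx)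
          have hPy : P = [y] := by
            refine eq_single P ?_ (fun z hz => ?_) ?_
            · rw [hP, restrictWord, List.mem_filter]
              rw [hp, List.mem_filter]
              exact ⟨⟨mem_fo.2 (hw.1 y), by simpa using dy⟩, by simp⟩
            · rw [hP, restrictWord, List.mem_filter] at hz
              obtain ⟨hzp, hzxy⟩ := hz
              rw [hp, List.mem_filter] at hzp
              rcases (by simpa using hzxy : z = x ∨ z = y) with rfl | rfl
              · exact absurd (by simpa using hzp.2) dx
              · rfl
            · exact ((fo_nodup w).filter _).filter _
          have hsx : s = x :=
            head_eq_of_lt hxy.symm (fun z hz => (hmemA z hz).symm) h0 (by omega) hs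
          rw [hPy, p11_append, p11_single, junc_eval (u := [y]) (a := y) (by simp) hs, h0, hsx,
            if_neg (Ne.symm hxy)]
        · -- neither deficient
          have hPnil : P = [] := by
            rw [hPP, List.filter_eq_nil_iff]
            intro z hz
            simp only [Bool.and_eq_true, decide_eq_true_eq, not_and]
            rintro (rfl | rfl) <;> simp [dx, dy]
          rw [hPnil, List.nil_append, h0]
      · intro hle0
        by_contra hnadj
        have hA1 : ¬ pattern11Count A ≤ 0 := fun hcon => hnadj (hiff.2 hcon)
        have hge := p11_append_ge P A
        omega
    · -- sum decreases
      have key : ∀ v ∈ Finset.univ (α := V),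
          (M - (p ++ w).count v) + (if w.count v < M then 1 else 0) = M - w.count v := by
        intro v _
        rw [hcnt]
        have := hle v
        split_ifs with h <;> omega
      have hsum2 : ∑ v : V, ((M - (p ++ w).count v) + (if w.count v < M then 1 else 0))
          = ∑ v : V, (M - w.count v) := Finset.sum_congr rfl key
      rw [Finset.sum_add_distrib] at hsum2
      have hone : (1:ℕ) ≤ ∑ v : V, (if w.count v < M then 1 else 0) := by
        have hsgl := Finset.single_le_sum (f := fun v => if w.count v < M then 1 else 0)
          (fun i _ => Nat.zero_le _) (Finset.mem_univ v0)
        simpa [hv0'] using hsgl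
      omega

lemma exists_uniform (G : SimpleGraph V) (h : Representable 0 G) :
    ∃ (w : List V) (n : ℕ), Represents 0 w G ∧ ∀ v : V, w.count v = n := by
  obtain ⟨w0, hw0⟩ := h
  obtain ⟨w, hw, hcnt⟩ := step_uniform G (Finset.univ.sup fun v => w0.count v)
    (∑ v : V, ((Finset.univ.sup fun v => w0.count v) - w0.count v)) w0 hw0
    (fun v => Finset.le_sup (f := fun v => w0.count v) (Finset.mem_univ v)) le_rfl
  exact ⟨w, _, hw, hcnt⟩

end Uniform
/-- if `G` is a finite word-representable graph, `V₁, …, V_k` are pairwise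
disjoint subsets of the vertex set, and `H` is obtained from `G` by removing every edge
whose both endpoints lie in the same set `V_i`, then `H` is 1-11-representable. -/
theorem stmt1 {V : Type*} [Fintype V] [DecidableEq V] (G : SimpleGraph V)
    (hG : Representable 0 G) (k : ℕ) (Vs : Fin k → Set V)
    (hdisj : ∀ i j : Fin k, i ≠ j → Disjoint (Vs i) (Vs j))
    (H : SimpleGraph V)
    (hH : ∀ x y : V, H.Adj x y ↔ (G.Adj x y ∧ ∀ i : Fin k, ¬ (x ∈ Vs i ∧ y ∈ Vs i))) :
    Representable 1 H := by
  classical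
  obtain ⟨w, n, hw, hn⟩ := exists_uniform G hG
  set C : Fin k → List V := fun i => (fo w).filter (fun v => decide (v ∈ Vs i)) with hC
  set X1 : List V := (List.finRange k).flatMap (fun i => (C i).reverse) with hX1
  set X2 : List V := ((List.finRange k).flatMap C).reverse with hX2
  have huniq : ∀ (i j : Fin k) (z : V), z ∈ Vs i → z ∈ Vs j → i = j := by
    intro i j z hi hj
    by_contra hne
    exact Set.disjoint_left.1 (hdisj i j hne) hi hj
  refine ⟨X1 ++ (w ++ (w ++ X2)),
    fun v => List.mem_append_right _ (List.mem_append_left _ (hw.1 v)),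
    fun x y hxy => ?_⟩
  have hiff := hw.2 x y hxy
  set A := restrictWord w x y with hA
  have hxA : x ∈ A := mem_restrict_iff.2 ⟨hw.1 x, Or.inl rfl⟩
  have hyA : y ∈ A := mem_restrict_iff.2 ⟨hw.1 y, Or.inr rfl⟩
  have hmemA : ∀ z ∈ A, z = x ∨ z = y := fun z hz => (mem_restrict_iff.1 hz).2
  have hAne : A ≠ [] := List.ne_nil_of_mem hxA
  obtain ⟨s, hs⟩ : ∃ s, A.head? = some s := by
    cases h : A.head? with
    | none => exact absurd (List.head?_eq_none_iff.1 h) hAne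
    | some s => exact ⟨s, rfl⟩
  obtain ⟨e, he⟩ : ∃ e, A.getLast? = some e := by
    cases h : A.getLast? with
    | none => exact absurd (List.getLast?_eq_none_iff.1 h) hAne
    | some e => exact ⟨e, rfl⟩
  have hsxy : s = x ∨ s = y := hmemA s (List.mem_of_mem_head? (Option.mem_def.2 hs))
  have hexy : e = x ∨ e = y := hmemA e (List.mem_of_getLast? he)
  have hcxy : A.count x = A.count y := by
    rw [hA, restrict_count_left, restrict_count_right, hn x, hn y]
  have hres : restrictWord (X1 ++ (w ++ (w ++ X2))) x y
      = restrictWord X1 x y ++ (A ++ (A ++ restrictWord X2 x y)) := by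
    rw [restrict_append, restrict_append, restrict_append]
  set g : Fin k → List V := fun i => (C i).filter (fun z => decide (z = x ∨ z = y)) with hg
  have hF1 : restrictWord X1 x y = (List.finRange k).flatMap (fun i => (g i).reverse) := by
    simp only [hX1, restrictWord, List.filter_flatMap, hg, List.filter_reverse]
  have hF2 : restrictWord X2 x y = ((List.finRange k).flatMap g).reverse := by
    simp only [hX2, restrictWord, List.filter_reverse, List.filter_flatMap, hg]
  have hg_nil : ∀ i : Fin k, x ∉ Vs i → y ∉ Vs i → g i = [] := by
    intro i hxi hyi
    simp only [hg, hC, List.filter_eq_nil_iff]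
    intro z hz
    have hzi : z ∈ Vs i := by simpa using (List.mem_filter.1 hz).2
    simp only [decide_eq_true_eq]
    rintro (rfl | rfl)
    · exact hxi hzi
    · exact hyi hzi
  have hg_single_x : ∀ i : Fin k, x ∈ Vs i → y ∉ Vs i → g i = [x] := by
    intro i hxi hyi
    refine eq_single _ ?_ (fun z hz => ?_) ?_
    · simp only [hg, hC, List.mem_filter]
      exact ⟨⟨mem_fo.2 (hw.1 x), by simpa using hxi⟩, by simp⟩
    · simp only [hg, hC, List.mem_filter] at hz
      obtain ⟨⟨-, hzi⟩, hzxy⟩ := hz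
      rcases (by simpa using hzxy : z = x ∨ z = y) with rfl | rfl
      · rfl
      · exact absurd (by simpa using hzi) hyi
    · exact ((fo_nodup w).filter _).filter _
  have hg_single_y : ∀ i : Fin k, x ∉ Vs i → y ∈ Vs i → g i = [y] := by
    intro i hxi hyi
    refine eq_single _ ?_ (fun z hz => ?_) ?_
    · simp only [hg, hC, List.mem_filter]
      exact ⟨⟨mem_fo.2 (hw.1 y), by simpa using hyi⟩, by simp⟩
    · simp only [hg, hC, List.mem_filter] at hz
      obtain ⟨⟨-, hzi⟩, hzxy⟩ := hz
      rcases (by simpa using hzxy : z = x ∨ z = y) with rfl | rfl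
      · exact absurd (by simpa using hzi) hxi
      · rfl
    · exact ((fo_nodup w).filter _).filter _
  have hg_pair : ∀ i : Fin k, x ∈ Vs i → y ∈ Vs i → g i = fo A := by
    intro i hxi hyi
    have h1 : g i = (fo w).filter
        (fun z => decide (z = x ∨ z = y) && decide (z ∈ Vs i)) := by
      simp only [hg, hC, List.filter_filter]
    rw [h1, hA, ← restrict_fo, restrictWord]
    refine List.filter_congr (fun z _ => ?_)
    by_cases hzz : z = x ∨ z = y
    · have hzi : z ∈ Vs i := by rcases hzz with rfl | rfl <;> assumption
      simp [hzz, hzi]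
    · simp [hzz]
  have hfopair : fo A = [x, y] ∨ fo A = [y, x] :=
    eq_pair hxy (fo A) (fo_nodup A) (mem_fo.2 hxA) (mem_fo.2 hyA)
      (fun z hz => hmemA z (mem_fo.1 hz))
  have hfohead : (fo A).head? = some s := by rw [head?_fo, hs]
  have hnot : ¬ G.Adj x y → 1 ≤ pattern11Count A := by
    intro h
    by_contra hc
    exact h (hiff.2 (by omega))
  have hback : pattern11Count
      (restrictWord X1 x y ++ (A ++ (A ++ restrictWord X2 x y))) ≤ 1 → G.Adj x y := by
    intro h1
    by_contra hnadj
    have := double_ge (A := A) (P := restrictWord X1 x y) (Q := restrictWord X2 x y)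
      (hnot hnadj)
    omega
  rw [hres, hH]
  by_cases hbx : ∃ i, x ∈ Vs i
  · obtain ⟨ix, hix⟩ := hbx
    by_cases hby : ∃ j, y ∈ Vs j
    · obtain ⟨jy, hjy⟩ := hby
      by_cases hij : ix = jy
      · -- same block : H-side is false and the pattern count is ≥ 2
        subst hij
        constructor
        · rintro ⟨-, hns⟩
          exact absurd ⟨hix, hjy⟩ (hns ix)
        · intro hle1
          exfalso
          by_cases hadj : G.Adj x y
          · have h0 : pattern11Count A = 0 := Nat.le_zero.1 (hiff.1 hadj)
            have hse : s ≠ e := ends_ne hxy hmemA h0 hcxy hs he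
            have hgi : ∀ i' : Fin k, i' ≠ ix → g i' = [] := fun i' hne' =>
              hg_nil i' (fun hc => hne' (huniq _ _ _ hc hix))
                (fun hc => hne' (huniq _ _ _ hc hjy))
            have hFS1 := flat_single (fun i => (g i).reverse) _ (List.nodup_finRange k) ix
              (List.mem_finRange ix)
              (fun i _ hne' => show (g i).reverse = [] from by rw [hgi i hne', List.reverse_nil])
            have hF1v : restrictWord X1 x y = (fo A).reverse := by
              rw [hF1, hFS1]
              show (g ix).reverse = (fo A).reverse
              rw [hg_pair ix hix hjy]
            have hF2v : restrictWord X2 x y = (fo A).reverse := by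
              rw [hF2, flat_single g _ (List.nodup_finRange k) ix
                (List.mem_finRange ix) (fun i _ hne' => hgi i hne'), hg_pair ix hix hjy]
            have hcount := count_sandwich (P := (fo A).reverse) (Q := (fo A).reverse)
              hs he h0 hse
            rw [hF1v, hF2v, hcount] at hle1
            rcases hfopair with hfo | hfo
            · have hsx : s = x := by rw [hfo] at hfohead; simpa using hfohead.symm
              have hey : e = y := by
                rcases hexy with h | h
                · exact absurd (hsx.trans h.symm) hse
                · exact h
              rw [hfo, junc_eval (u := [x, y].reverse) (a := x) (by simp) hs,
                junc_eval (v := [x, y].reverse) (b := y) he (by simp),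
                if_pos hsx.symm, if_pos hey] at hle1
              omega
            · have hsy : s = y := by rw [hfo] at hfohead; simpa using hfohead.symm
              have hex : e = x := by
                rcases hexy with h | h
                · exact h
                · exact absurd (hsy.trans h.symm) hse
              rw [hfo, junc_eval (u := [y, x].reverse) (a := y) (by simp) hs,
                junc_eval (v := [y, x].reverse) (b := x) he (by simp),
                if_pos hsy.symm, if_pos hex] at hle1
              omega
          · have := double_ge (A := A) (P := restrictWord X1 x y)
              (Q := restrictWord X2 x y) (hnot hadj)
            omega
      · -- x and y lie in different blocks
        have hns : ∀ i : Fin k, ¬ (x ∈ Vs i ∧ y ∈ Vs i) := by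
          rintro i ⟨h1, h2⟩
          exact hij ((huniq i ix x h1 hix).symm.trans (huniq i jy y h2 hjy))
        have hyix : y ∉ Vs ix := fun hc => hij (huniq ix jy y hc hjy)
        have hxjy : x ∉ Vs jy := fun hc => hij (huniq jy ix x hc hix).symm
        have hgi : ∀ i : Fin k, i ≠ ix → i ≠ jy → g i = [] := fun i h1 h2 =>
          hg_nil i (fun hc => h1 (huniq _ _ _ hc hix)) (fun hc => h2 (huniq _ _ _ hc hjy))
        have hgx : g ix = [x] := hg_single_x ix hix hyix
        have hgy : g jy = [y] := hg_single_y jy hxjy hjy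
        constructor
        · rintro ⟨hadj, -⟩
          have h0 : pattern11Count A = 0 := Nat.le_zero.1 (hiff.1 hadj)
          have hse : s ≠ e := ends_ne hxy hmemA h0 hcxy hs he
          rcases lt_or_gt_of_ne hij with hlt | hgt
          · have hFS1 := flat_pair hlt (fun i => (g i).reverse) _
              (List.pairwise_lt_finRange k) (List.mem_finRange ix) (List.mem_finRange jy)
              (fun i _ h1 h2 => show (g i).reverse = [] from by rw [hgi i h1 h2, List.reverse_nil])
            have hF1v : restrictWord X1 x y = [x, y] := by
              rw [hF1, hFS1]
              show (g ix).reverse ++ (g jy).reverse = [x, y]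
              simp [hgx, hgy]
            have hF2v : restrictWord X2 x y = [y, x] := by
              rw [hF2, flat_pair hlt g _ (List.pairwise_lt_finRange k)
                (List.mem_finRange ix) (List.mem_finRange jy)
                (fun i _ h1 h2 => hgi i h1 h2), hgx, hgy]
              rfl
            have hcount := count_sandwich (P := [x, y]) (Q := [y, x]) hs he h0 hse
            rw [junc_eval (u := [x, y]) (a := y) (by simp) hs,
              junc_eval (v := [y, x]) (b := y) he (by simp)] at hcount
            have hkey := if_sum_eval hxy hsxy hexy hse y (Or.inr rfl)
            rw [hF1v, hF2v, hcount, p11_pair, p11_pair, if_neg hxy, if_neg (Ne.symm hxy)]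
            omega
          · have hFS1 := flat_pair hgt (fun i => (g i).reverse) _
              (List.pairwise_lt_finRange k) (List.mem_finRange jy) (List.mem_finRange ix)
              (fun i _ h1 h2 => show (g i).reverse = [] from by rw [hgi i h2 h1, List.reverse_nil])
            have hF1v : restrictWord X1 x y = [y, x] := by
              rw [hF1, hFS1]
              show (g jy).reverse ++ (g ix).reverse = [y, x]
              simp [hgx, hgy]
            have hF2v : restrictWord X2 x y = [x, y] := by
              rw [hF2, flat_pair hgt g _ (List.pairwise_lt_finRange k)
                (List.mem_finRange jy) (List.mem_finRange ix)
                (fun i _ h1 h2 => hgi i h2 h1), hgx, hgy]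
              rfl
            have hcount := count_sandwich (P := [y, x]) (Q := [x, y]) hs he h0 hse
            rw [junc_eval (u := [y, x]) (a := x) (by simp) hs,
              junc_eval (v := [x, y]) (b := x) he (by simp)] at hcount
            have hkey := if_sum_eval hxy hsxy hexy hse x (Or.inl rfl)
            rw [hF1v, hF2v, hcount, p11_pair, p11_pair, if_neg hxy, if_neg (Ne.symm hxy)]
            omega
        · intro hle1
          exact ⟨hback hle1, hns⟩
    · -- only x lies in a block
      have hns : ∀ i : Fin k, ¬ (x ∈ Vs i ∧ y ∈ Vs i) := by
        rintro i ⟨-, h2⟩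
        exact hby ⟨i, h2⟩
      have hgi : ∀ i : Fin k, i ≠ ix → g i = [] := fun i h1 =>
        hg_nil i (fun hc => h1 (huniq _ _ _ hc hix)) (fun hc => hby ⟨i, hc⟩)
      have hgx : g ix = [x] := hg_single_x ix hix (fun hc => hby ⟨ix, hc⟩)
      constructor
      · rintro ⟨hadj, -⟩
        have h0 : pattern11Count A = 0 := Nat.le_zero.1 (hiff.1 hadj)
        have hse : s ≠ e := ends_ne hxy hmemA h0 hcxy hs he
        have hFS1 := flat_single (fun i => (g i).reverse) _ (List.nodup_finRange k) ix
          (List.mem_finRange ix) (fun i _ h1 => show (g i).reverse = [] from by rw [hgi i h1, List.reverse_nil])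
        have hF1v : restrictWord X1 x y = [x] := by
          rw [hF1, hFS1]
          show (g ix).reverse = [x]
          simp [hgx]
        have hF2v : restrictWord X2 x y = [x] := by
          rw [hF2, flat_single g _ (List.nodup_finRange k) ix
            (List.mem_finRange ix) (fun i _ h1 => hgi i h1), hgx]
          simp
        have hcount := count_sandwich (P := [x]) (Q := [x]) hs he h0 hse
        rw [junc_eval (u := [x]) (a := x) (by simp) hs,
          junc_eval (v := [x]) (b := x) he (by simp)] at hcount
        have hkey := if_sum_eval hxy hsxy hexy hse x (Or.inl rfl)
        rw [hF1v, hF2v, hcount, p11_single]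
        omega
      · intro hle1
        exact ⟨hback hle1, hns⟩
  · have hns : ∀ i : Fin k, ¬ (x ∈ Vs i ∧ y ∈ Vs i) := by
      rintro i ⟨h1, -⟩
      exact hbx ⟨i, h1⟩
    by_cases hby : ∃ j, y ∈ Vs j
    · -- only y lies in a block
      obtain ⟨jy, hjy⟩ := hby
      have hgi : ∀ i : Fin k, i ≠ jy → g i = [] := fun i h1 =>
        hg_nil i (fun hc => hbx ⟨i, hc⟩) (fun hc => h1 (huniq _ _ _ hc hjy))
      have hgy : g jy = [y] := hg_single_y jy (fun hc => hbx ⟨jy, hc⟩) hjy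
      constructor
      · rintro ⟨hadj, -⟩
        have h0 : pattern11Count A = 0 := Nat.le_zero.1 (hiff.1 hadj)
        have hse : s ≠ e := ends_ne hxy hmemA h0 hcxy hs he
        have hFS1 := flat_single (fun i => (g i).reverse) _ (List.nodup_finRange k) jy
          (List.mem_finRange jy) (fun i _ h1 => show (g i).reverse = [] from by rw [hgi i h1, List.reverse_nil])
        have hF1v : restrictWord X1 x y = [y] := by
          rw [hF1, hFS1]
          show (g jy).reverse = [y]
          simp [hgy]
        have hF2v : restrictWord X2 x y = [y] := by
          rw [hF2, flat_single g _ (List.nodup_finRange k) jy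
            (List.mem_finRange jy) (fun i _ h1 => hgi i h1), hgy]
          simp
        have hcount := count_sandwich (P := [y]) (Q := [y]) hs he h0 hse
        rw [junc_eval (u := [y]) (a := y) (by simp) hs,
          junc_eval (v := [y]) (b := y) he (by simp)] at hcount
        have hkey := if_sum_eval hxy hsxy hexy hse y (Or.inr rfl)
        rw [hF1v, hF2v, hcount, p11_single]
        omega
      · intro hle1
        exact ⟨hback hle1, hns⟩
    · -- no blocks at all
      have hgi : ∀ i : Fin k, g i = [] := fun i =>
        hg_nil i (fun hc => hbx ⟨i, hc⟩) (fun hc => hby ⟨i, hc⟩)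
      have hF1v : restrictWord X1 x y = [] := by
        rw [hF1, flat_nil _ _ (fun i _ => show (g i).reverse = [] from by rw [hgi i, List.reverse_nil])]
      have hF2v : restrictWord X2 x y = [] := by
        rw [hF2, flat_nil _ _ (fun i _ => hgi i)]
        simp
      constructor
      · rintro ⟨hadj, -⟩
        have h0 : pattern11Count A = 0 := Nat.le_zero.1 (hiff.1 hadj)
        have hse : s ≠ e := ends_ne hxy hmemA h0 hcxy hs he
        have hcount := count_sandwich (P := ([] : List V)) (Q := ([] : List V)) hs he h0 hse
        rw [junc_nil_left, junc_nil_right, p11_nil] at hcount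
        rw [hF1v, hF2v, hcount]
        omega
      · intro hle1
        exact ⟨hback hle1, hns⟩
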